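/- Let T1 < T2 be real numbers, let (λ_n)_{n≥1} be a strictly increasing sequence of positive real numbers, and let (a_n)_{n≥1} be real numbers such that the series ∑_{n=1}^∞ |a_n| e^{-λ_n T1} converges. If ∑_{n=1}^∞ a_n e^{-λ_n t} = 0 for every t with T1 < t < T2, then a_n = 0 for every n ≥ 1. -/

import Mathlib

open Real

theorem dirichlet_series_uniqueness
    (T1 T2 : ℝ) (hT : T1 < T2)
    (lam : ℕ → ℝ) (hmono : StrictMono lam) (hpos : ∀ n, 0 < lam n)
    (a : ℕ → ℝ)
    (hsum : Summable (fun n => |a n| * Real.exp (-(lam n) * T1)))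
    (hzero : ∀ t, T1 < t → t < T2 → ∑' n, a n * Real.exp (-(lam n) * t) = 0) :
    ∀ n, a n = 0 := by
  -- Step 1: the complex Dirichlet series
  set U : Set ℂ := {s : ℂ | T1 < s.re} with hU
  set F : ℂ → ℂ := fun s => ∑' n, (a n : ℂ) * Complex.exp (-(lam n : ℂ) * s) with hF
  have hUopen : IsOpen U := by
    have : U = Complex.re ⁻¹' Set.Ioi T1 := rfl
    rw [this]
    exact isOpen_Ioi.preimage Complex.continuous_re
  have hbound : ∀ (n : ℕ) (s : ℂ), s ∈ U →
      ‖(a n : ℂ) * Complex.exp (-(lam n : ℂ) * s)‖ ≤ |a n| * Real.exp (-(lam n) * T1) := by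
    intro n s hs
    rw [norm_mul, Complex.norm_real, Complex.norm_exp]
    have hre : (-(lam n : ℂ) * s).re = -(lam n) * s.re := by simp
    rw [hre, Real.norm_eq_abs]
    have hsre : T1 < s.re := hs
    have : Real.exp (-(lam n) * s.re) ≤ Real.exp (-(lam n) * T1) := by
      apply Real.exp_le_exp.mpr
      have := (hpos n).le
      nlinarith
    exact mul_le_mul_of_nonneg_left this (abs_nonneg _)
  have hTU : TendstoUniformlyOn
      (fun N s => ∑ n ∈ Finset.range N, (a n : ℂ) * Complex.exp (-(lam n : ℂ) * s))
      F Filter.atTop U := tendstoUniformlyOn_tsum_nat hsum hbound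
  have hdiff : DifferentiableOn ℂ F U := by
    apply hTU.tendstoLocallyUniformlyOn.differentiableOn _ hUopen
    filter_upwards with N
    apply DifferentiableOn.fun_sum
    intro i _
    apply DifferentiableOn.mul (differentiableOn_const _)
    apply Differentiable.differentiableOn
    exact Complex.differentiable_exp.comp ((differentiable_const _).mul differentiable_id)
  have hanal : AnalyticOnNhd ℂ F U := hdiff.analyticOnNhd hUopen
  have hconn : IsPreconnected U := (convex_halfSpace_re_gt T1).isPreconnected
  -- F agrees with the real series on real points
  have hreal : ∀ t : ℝ, F (t : ℂ) = ((∑' n, a n * Real.exp (-(lam n) * t)) : ℝ) := by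
    intro t
    have hterm : ∀ n : ℕ, ((a n * Real.exp (-(lam n) * t) : ℝ) : ℂ)
        = (a n : ℂ) * Complex.exp (-(lam n : ℂ) * (t : ℂ)) := by
      intro n
      rw [Complex.ofReal_mul, Complex.ofReal_exp]
      congr 2
      push_cast
      ring
    show (∑' n, (a n : ℂ) * Complex.exp (-(lam n : ℂ) * (t : ℂ))) = _
    rw [Complex.ofReal_tsum]
    exact tsum_congr fun n => (hterm n).symm
  -- Frequently zero near z₀
  set c : ℝ := (T1 + T2) / 2 with hc
  set d : ℝ := (T2 - T1) / 2 with hd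
  have hdpos : 0 < d := by simp [hd]; linarith
  have hfreq : ∃ᶠ z in nhdsWithin (c : ℂ) {(c : ℂ)}ᶜ, F z = 0 := by
    have htend : Filter.Tendsto (fun k : ℕ => ((c + d / (k + 2) : ℝ) : ℂ)) Filter.atTop
        (nhdsWithin (c : ℂ) {(c : ℂ)}ᶜ) := by
      rw [tendsto_nhdsWithin_iff]
      constructor
      · have h2 : Filter.Tendsto (fun k : ℕ => d / (k + 2) : ℕ → ℝ) Filter.atTop (nhds 0) := by
          apply Filter.Tendsto.div_atTop tendsto_const_nhds
          exact Filter.tendsto_atTop_add_const_right _ 2 tendsto_natCast_atTop_atTop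
        have h1 : Filter.Tendsto (fun k : ℕ => c + d / (k + 2)) Filter.atTop (nhds c) := by
          simpa using (tendsto_const_nhds (x := c)).add h2
        exact (Complex.continuous_ofReal.tendsto c).comp h1
      · filter_upwards with k
        simp only [Set.mem_compl_iff, Set.mem_singleton_iff]
        intro h
        have : c + d / (k + 2) = c := by exact_mod_cast h
        have : d / ((k : ℝ) + 2) = 0 := by linarith
        have hk2 : (0:ℝ) < (k:ℝ) + 2 := by positivity
        rw [div_eq_zero_iff] at this
        rcases this with h' | h'
        · linarith
        · linarith
    apply htend.frequently
    apply Filter.Frequently.of_forall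
    intro k
    have hk2 : (0:ℝ) < (k:ℝ) + 2 := by positivity
    have h1 : T1 < c + d / (k + 2) := by
      have : 0 < d / ((k:ℝ) + 2) := by positivity
      simp only [hc]; linarith
    have h2 : c + d / (k + 2) < T2 := by
      have : d / ((k:ℝ) + 2) < d := by
        rw [div_lt_iff₀ hk2]; nlinarith
      simp only [hc, hd] at this ⊢; linarith
    rw [hreal, hzero _ h1 h2, Complex.ofReal_zero]
  have hcU : (c : ℂ) ∈ U := by
    simp only [hU, Set.mem_setOf_eq, Complex.ofReal_re, hc]; linarith
  have hFzero : Set.EqOn F 0 U :=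
    hanal.eqOn_zero_of_preconnected_of_frequently_eq_zero hconn hcU hfreq
  -- Step 2: the real series vanishes for all t > T1
  have hf0 : ∀ t : ℝ, T1 < t → ∑' n, a n * Real.exp (-(lam n) * t) = 0 := by
    intro t ht
    have htu : (t : ℂ) ∈ U := by simpa [hU] using ht
    have h := hFzero htu
    simp only [Pi.zero_apply] at h
    rw [hreal t] at h
    exact_mod_cast h
  -- Summability at every t ≥ T1
  have hsum_t : ∀ t : ℝ, T1 ≤ t → Summable (fun n => a n * Real.exp (-(lam n) * t)) := by
    intro t ht
    apply Summable.of_norm_bounded hsum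
    intro n
    rw [norm_mul, Real.norm_eq_abs, Real.norm_eq_abs, abs_of_pos (Real.exp_pos _)]
    apply mul_le_mul_of_nonneg_left _ (abs_nonneg _)
    apply Real.exp_le_exp.mpr
    nlinarith [(hpos n).le]
  -- Step 3: strong induction
  intro n
  induction n using Nat.strong_induction_on with
  | _ m ih =>
    set T' : ℝ := T1 + 1 with hT'
    set δ : ℝ := lam (m + 1) - lam m with hδ
    have hδpos : 0 < δ := sub_pos.mpr (hmono (Nat.lt_succ_self m))
    -- the constant C
    set C : ℝ := ∑' i, |a (i + (m + 1))| * Real.exp ((lam m - lam (i + (m + 1))) * T') with hC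
    have hCsum : Summable (fun i => |a (i + (m + 1))| * Real.exp ((lam m - lam (i + (m + 1))) * T')) := by
      apply Summable.of_nonneg_of_le (fun i => by positivity)
        (f := fun i => (|a (i + (m + 1))| * Real.exp (-(lam (i + (m + 1))) * T1)) * Real.exp (lam m * T'))
      · intro i
        rw [mul_assoc]
        apply mul_le_mul_of_nonneg_left _ (abs_nonneg _)
        rw [← Real.exp_add]
        apply Real.exp_le_exp.mpr
        have := (hpos (i + (m + 1))).le
        nlinarith [hT'.ge]
      · have h := (hsum.comp_injective (add_left_injective (m + 1))).mul_right (Real.exp (lam m * T'))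
        simpa [Function.comp] using h
    -- key inequality
    have key : ∀ t : ℝ, T' ≤ t → |a m| ≤ C * Real.exp (-δ * (t - T')) := by
      intro t ht
      have htT1 : T1 < t := by simp only [hT'] at ht; linarith
      have hsummt := hsum_t t htT1.le
      have hsplit := hsummt.sum_add_tsum_nat_add (m + 1)
      rw [hf0 t htT1] at hsplit
      have hsum_fin : ∑ i ∈ Finset.range (m + 1), a i * Real.exp (-(lam i) * t)
          = a m * Real.exp (-(lam m) * t) := by
        rw [Finset.sum_range_succ]
        have : ∑ i ∈ Finset.range m, a i * Real.exp (-(lam i) * t) = 0 := by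
          apply Finset.sum_eq_zero
          intro i hi
          rw [ih i (Finset.mem_range.mp hi), zero_mul]
        rw [this, zero_add]
      rw [hsum_fin] at hsplit
      have heq : a m * Real.exp (-(lam m) * t) = -∑' i, a (i + (m + 1)) * Real.exp (-(lam (i + (m + 1))) * t) := by
        linarith
      have htail : Summable (fun i => a (i + (m + 1)) * Real.exp (-(lam (i + (m + 1))) * t)) :=
        hsummt.comp_injective (add_left_injective (m + 1))
      have hnormsum : Summable (fun i => |a (i + (m + 1))| * Real.exp (-(lam (i + (m + 1))) * t)) := by
        have := htail.abs
        simpa [abs_mul, abs_of_pos (Real.exp_pos _)] using this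
      have h1 : |a m| * Real.exp (-(lam m) * t)
          ≤ ∑' i, |a (i + (m + 1))| * Real.exp (-(lam (i + (m + 1))) * t) := by
        rw [← abs_of_pos (Real.exp_pos (-(lam m) * t)), ← abs_mul, heq, abs_neg]
        have hns : Summable (fun i => ‖a (i + (m + 1)) * Real.exp (-(lam (i + (m + 1))) * t)‖) := by
          simpa only [norm_mul, Real.norm_eq_abs, abs_of_pos (Real.exp_pos _)] using hnormsum
        have h0 := norm_tsum_le_tsum_norm hns
        rw [Real.norm_eq_abs] at h0
        refine le_trans h0 (le_of_eq ?_)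
        apply tsum_congr
        intro i
        rw [norm_mul, Real.norm_eq_abs, Real.norm_eq_abs, abs_of_pos (Real.exp_pos _)]
      -- termwise bound
      have h2 : ∑' i, |a (i + (m + 1))| * Real.exp (-(lam (i + (m + 1))) * t)
          ≤ C * Real.exp (-δ * (t - T')) * Real.exp (-(lam m) * t) := by
        have hterm : ∀ i, |a (i + (m + 1))| * Real.exp (-(lam (i + (m + 1))) * t)
            ≤ (|a (i + (m + 1))| * Real.exp ((lam m - lam (i + (m + 1))) * T'))
              * (Real.exp (-δ * (t - T')) * Real.exp (-(lam m) * t)) := by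
          intro i
          rw [mul_assoc, ← Real.exp_add, ← Real.exp_add]
          apply mul_le_mul_of_nonneg_left _ (abs_nonneg _)
          apply Real.exp_le_exp.mpr
          have hmono' : lam (m + 1) ≤ lam (i + (m + 1)) := by
            apply hmono.monotone
            omega
          have htT' : 0 ≤ t - T' := by linarith
          nlinarith
        calc ∑' i, |a (i + (m + 1))| * Real.exp (-(lam (i + (m + 1))) * t)
            ≤ ∑' i, (|a (i + (m + 1))| * Real.exp ((lam m - lam (i + (m + 1))) * T'))
              * (Real.exp (-δ * (t - T')) * Real.exp (-(lam m) * t)) := by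
              exact hnormsum.tsum_le_tsum hterm (hCsum.mul_right _)
          _ = C * (Real.exp (-δ * (t - T')) * Real.exp (-(lam m) * t)) := by
              rw [tsum_mul_right]
          _ = C * Real.exp (-δ * (t - T')) * Real.exp (-(lam m) * t) := by ring
      have h3 : |a m| * Real.exp (-(lam m) * t)
          ≤ C * Real.exp (-δ * (t - T')) * Real.exp (-(lam m) * t) := le_trans h1 h2
      exact le_of_mul_le_mul_right h3 (Real.exp_pos _)
    -- take the limit t → ∞
    have hlim : Filter.Tendsto (fun t : ℝ => C * Real.exp (-δ * (t - T'))) Filter.atTop (nhds 0) := by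
      have h1 : Filter.Tendsto (fun t : ℝ => -δ * (t - T')) Filter.atTop Filter.atBot := by
        apply Filter.Tendsto.const_mul_atTop_of_neg (by linarith : -δ < 0)
        exact Filter.tendsto_atTop_add_const_right _ (-T') Filter.tendsto_id
      have h2 := Real.tendsto_exp_atBot.comp h1
      have := h2.const_mul C
      simpa using this
    have habs : |a m| ≤ 0 := by
      apply ge_of_tendsto hlim
      filter_upwards [Filter.eventually_ge_atTop T'] with t ht
      exact key t ht
    exact abs_eq_zero.mp (le_antisymm habs (abs_nonneg _))
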